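/- If a finite-dimensional complex Lie algebra g of dimension 2n+1 admits a contact form, then ind g = 1. -/

import Mathlib

open scoped TensorProduct

noncomputable section

namespace ContactSeaweeds

/-! ### Index of a Lie algebra -/

/-- The kernel of the Kirillov form `B_φ(x, y) = φ ⁅x, y⁆` associated to a one-form `φ`. -/
def kirillovKernel {L : Type*} [LieRing L] [LieAlgebra ℂ L] (φ : Module.Dual ℂ L) :
    Submodule ℂ L where
  carrier := {x | ∀ y, φ ⁅x, y⁆ = 0}
  add_mem' := by
    intro x y hx hy z
    simp [add_lie, hx z, hy z]
  zero_mem' := by intro y; simp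
  smul_mem' := by
    intro c x hx y
    simp [smul_lie, hx y]

/-- The index of a complex Lie algebra:
`ind L = min_{φ ∈ L*} dim {x ∈ L | φ ⁅x, y⁆ = 0 for all y ∈ L}`. -/
def lieIndex (L : Type*) [LieRing L] [LieAlgebra ℂ L] : ℕ :=
  sInf {d : ℕ | ∃ φ : Module.Dual ℂ L, d = Module.finrank ℂ (kirillovKernel φ)}

/-! ### Contact structures -/

/-- Wedge product of complex-valued alternating forms. -/
def wedge {L : Type*} [AddCommGroup L] [Module ℂ L] {p q : ℕ}
    (α : L [⋀^Fin p]→ₗ[ℂ] ℂ) (β : L [⋀^Fin q]→ₗ[ℂ] ℂ) : L [⋀^Fin (p + q)]→ₗ[ℂ] ℂ :=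
  ((TensorProduct.lid ℂ ℂ).toLinearMap.compAlternatingMap (α.domCoprod β)).domDomCongr
    finSumFinEquiv

/-- `k`-th wedge power of a two-form. -/
def wedgePow {L : Type*} [AddCommGroup L] [Module ℂ L] (β : L [⋀^Fin 2]→ₗ[ℂ] ℂ) :
    (k : ℕ) → L [⋀^Fin (2 * k)]→ₗ[ℂ] ℂ
  | 0 => (AlternatingMap.constOfIsEmpty ℂ L (Fin 0) 1).domDomCongr (finCongr (by ring))
  | k + 1 => (wedge β (wedgePow β k)).domDomCongr (finCongr (by ring))

/-- The alternating two-form `dφ (x, y) = -φ ⁅x, y⁆`. -/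
def dForm {L : Type*} [LieRing L] [LieAlgebra ℂ L] (φ : Module.Dual ℂ L) :
    L [⋀^Fin 2]→ₗ[ℂ] ℂ where
  toFun v := -φ ⁅v 0, v 1⁆
  map_update_add' := by
    intro _ v i x y
    fin_cases i <;>
      simp [Function.update_apply, Fin.ext_iff, add_lie, lie_add] <;> ring
  map_update_smul' := by
    intro _ v i c x
    fin_cases i <;>
      simp [Function.update_apply, Fin.ext_iff, smul_lie, lie_smul]
  map_eq_zero_of_eq' := by
    intro v i j hv hij
    have : i = 0 ∧ j = 1 ∨ i = 1 ∧ j = 0 := by omega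
    rcases this with ⟨hi, hj⟩ | ⟨hi, hj⟩ <;> subst hi <;> subst hj <;>
      · show -φ ⁅v 0, v 1⁆ = 0
        rw [hv]
        simp

/-- The `(1 + 2n)`-form `φ ∧ (dφ)^n`. -/
def contactCandidate {L : Type*} [LieRing L] [LieAlgebra ℂ L] (n : ℕ)
    (φ : Module.Dual ℂ L) : L [⋀^Fin (1 + 2 * n)]→ₗ[ℂ] ℂ :=
  wedge (AlternatingMap.ofSubsingleton ℂ L ℂ (0 : Fin 1) φ) (wedgePow (dForm φ) n)

/-- `φ` is a contact form: `φ ∧ (dφ)^n ≠ 0` (for a Lie algebra of dimension `2n + 1`). -/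
def IsContactForm {L : Type*} [LieRing L] [LieAlgebra ℂ L] (n : ℕ)
    (φ : Module.Dual ℂ L) : Prop :=
  contactCandidate n φ ≠ 0

/-- A complex Lie algebra is contact if it has (odd) dimension `2n + 1` and admits a one-form
`φ` with `φ ∧ (dφ)^n ≠ 0`. -/
def IsContact (L : Type*) [LieRing L] [LieAlgebra ℂ L] : Prop :=
  ∃ n : ℕ, Module.finrank ℂ L = 2 * n + 1 ∧ ∃ φ : Module.Dual ℂ L, IsContactForm n φ

/-! ### Seaweed algebras -/

/-- `c` is a composition of `n`: a list of positive integers summing to `n`. -/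
def IsComposition (n : ℕ) (c : List ℕ) : Prop :=
  (∀ x ∈ c, 0 < x) ∧ c.sum = n

/-- `i` and `j` (0-based) lie in the same block of the composition `c`. -/
def SameBlock (c : List ℕ) (i j : ℕ) : Prop :=
  ∃ k : ℕ, (c.take k).sum ≤ i ∧ i < (c.take (k + 1)).sum ∧
    (c.take k).sum ≤ j ∧ j < (c.take (k + 1)).sum

/-- The `(i, j)` location (0-based) is admissible for the seaweed determined by the
compositions `a` (lower-triangular blocks) and `b` (upper-triangular blocks). -/
def Admissible (a b : List ℕ) (i j : ℕ) : Prop :=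
  (j ≤ i ∧ SameBlock a i j) ∨ (i ≤ j ∧ SameBlock b i j)

lemma take_sum_mono (c : List ℕ) {m m' : ℕ} (h : m ≤ m') :
    (c.take m).sum ≤ (c.take m').sum := by
  obtain ⟨d, rfl⟩ := Nat.exists_eq_add_of_le h
  rw [List.take_add, List.sum_append]
  omega

lemma sameBlock_symm {c : List ℕ} {i j : ℕ} (h : SameBlock c i j) : SameBlock c j i := by
  obtain ⟨k, h1, h2, h3, h4⟩ := h
  exact ⟨k, h3, h4, h1, h2⟩

lemma sameBlock_trans {c : List ℕ} {i j k : ℕ} (h1 : SameBlock c i k) (h2 : SameBlock c k j) :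
    SameBlock c i j := by
  obtain ⟨k1, a1, a2, a3, a4⟩ := h1
  obtain ⟨k2, b1, b2, b3, b4⟩ := h2
  have hk : k1 = k2 := by
    rcases Nat.lt_trichotomy k1 k2 with h | h | h
    · have := take_sum_mono c (show k1 + 1 ≤ k2 from h)
      omega
    · exact h
    · have := take_sum_mono c (show k2 + 1 ≤ k1 from h)
      omega
  subst hk
  exact ⟨k1, a1, a2, b3, b4⟩

lemma sameBlock_between {c : List ℕ} {i j z : ℕ} (h : SameBlock c i j)
    (h1 : i ≤ z ∨ j ≤ z) (h2 : z ≤ i ∨ z ≤ j) : SameBlock c i z := by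
  obtain ⟨k, a1, a2, a3, a4⟩ := h
  exact ⟨k, a1, a2, by omega, by omega⟩

lemma admissible_trans {a b : List ℕ} {i j k : ℕ} (h1 : Admissible a b i k)
    (h2 : Admissible a b k j) : Admissible a b i j := by
  rcases h1 with ⟨hik, hsb1⟩ | ⟨hik, hsb1⟩ <;> rcases h2 with ⟨hkj, hsb2⟩ | ⟨hkj, hsb2⟩
  · exact Or.inl ⟨le_trans hkj hik, sameBlock_trans hsb1 hsb2⟩
  · rcases le_or_gt j i with hji | hij
    · exact Or.inl ⟨hji, sameBlock_between hsb1 (by omega) (by omega)⟩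
    · exact Or.inr ⟨le_of_lt hij, sameBlock_trans
        (sameBlock_symm (sameBlock_between hsb2 (by omega) (by omega))) hsb2⟩
  · rcases le_or_gt j i with hji | hij
    · exact Or.inl ⟨hji, sameBlock_trans
        (sameBlock_symm (sameBlock_between hsb2 (by omega) (by omega))) hsb2⟩
    · exact Or.inr ⟨le_of_lt hij, sameBlock_between hsb1 (by omega) (by omega)⟩
  · exact Or.inr ⟨le_trans hik hkj, sameBlock_trans hsb1 hsb2⟩

attribute [local instance 100] LieRing.ofAssociativeRing

/-- The type-A seaweed `pₙᴬ(a₁|⋯|aₘ \ b₁|⋯|b_t)`: the Lie algebra of traceless `n × n`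
complex matrices supported on admissible locations. -/
def seaweed (n : ℕ) (a b : List ℕ) : LieSubalgebra ℂ (Matrix (Fin n) (Fin n) ℂ) where
  carrier := {M | Matrix.trace M = 0 ∧
    ∀ i j : Fin n, ¬ Admissible a b i.val j.val → M i j = 0}
  add_mem' := by
    rintro M N ⟨hM1, hM2⟩ ⟨hN1, hN2⟩
    refine ⟨by simp [Matrix.trace_add, hM1, hN1], fun i j h => ?_⟩
    simp [Matrix.add_apply, hM2 i j h, hN2 i j h]
  zero_mem' := by simp
  smul_mem' := by
    rintro c M ⟨hM1, hM2⟩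
    refine ⟨by simp [Matrix.trace_smul, hM1], fun i j h => ?_⟩
    simp [Matrix.smul_apply, hM2 i j h]
  lie_mem' := by
    rintro M N ⟨hM1, hM2⟩ ⟨hN1, hN2⟩
    rw [Ring.lie_def]
    constructor
    · rw [Matrix.trace_sub, Matrix.trace_mul_comm, sub_self]
    · intro i j h
      rw [Matrix.sub_apply, Matrix.mul_apply, Matrix.mul_apply]
      have hz : ∀ k : Fin n, M i k * N k j = 0 ∧ N i k * M k j = 0 := by
        intro k
        constructor
        · by_cases hik : Admissible a b i.val k.val
          · rw [hN2 k j (fun hkj => h (admissible_trans hik hkj)), mul_zero]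
          · rw [hM2 i k hik, zero_mul]
        · by_cases hik : Admissible a b i.val k.val
          · rw [hM2 k j (fun hkj => h (admissible_trans hik hkj)), mul_zero]
          · rw [hN2 i k hik, zero_mul]
      rw [Finset.sum_congr rfl (fun k _ => (hz k).1), Finset.sum_congr rfl (fun k _ => (hz k).2)]
      simp

/-! ### Meanders -/

/-- `{i, j}` (0-based, with `i < j`) is a top edge of the meander of the composition `a`. -/
def TopEdge (a : List ℕ) (i j : ℕ) : Prop :=
  ∃ k r : ℕ, 2 * r + 1 < a.getD k 0 ∧
    i = (a.take k).sum + r ∧ j = (a.take k).sum + (a.getD k 0 - 1 - r)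

/-- `{i, j}` (0-based, with `i < j`) is a bottom edge of the meander of the composition `b`. -/
def BottomEdge (b : List ℕ) (i j : ℕ) : Prop :=
  ∃ k r : ℕ, 2 * r + 1 < b.getD k 0 ∧
    i = (b.take k).sum + r ∧ j = (b.take k).sum + (b.getD k 0 - 1 - r)

/-- The meander of the seaweed with compositions `a` and `b`, as a graph on the `n` vertices:
two vertices are adjacent when they are joined by a top edge or a bottom edge. -/
def meander (n : ℕ) (a b : List ℕ) : SimpleGraph (Fin n) where
  Adj i j := i ≠ j ∧ (TopEdge a i.val j.val ∨ TopEdge a j.val i.val ∨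
    BottomEdge b i.val j.val ∨ BottomEdge b j.val i.val)
  symm := by
    constructor
    rintro i j ⟨h1, h2⟩
    exact ⟨h1.symm, by tauto⟩
  loopless := ⟨fun i h => h.1 rfl⟩

/-- The vertex `v` (0-based) lies on exactly one top edge of the meander. -/
def OneTop (a : List ℕ) (v : ℕ) : Prop :=
  ∃! w : ℕ, TopEdge a v w ∨ TopEdge a w v

/-- The vertex `v` (0-based) lies on exactly one bottom edge of the meander. -/
def OneBottom (b : List ℕ) (v : ℕ) : Prop :=
  ∃! w : ℕ, BottomEdge b v w ∨ BottomEdge b w v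

/-- A connected component of the meander is a cycle: each of its vertices lies on exactly one
top edge and exactly one bottom edge. -/
def IsCycleComp {n : ℕ} {a b : List ℕ} (c : (meander n a b).ConnectedComponent) : Prop :=
  ∀ v : Fin n, (meander n a b).connectedComponentMk v = c → OneTop a v.val ∧ OneBottom b v.val

/-- A connected component of the meander is a path (possibly a single vertex): it has a vertex
missing a top edge or a bottom edge. -/
def IsPathComp {n : ℕ} {a b : List ℕ} (c : (meander n a b).ConnectedComponent) : Prop :=
  ∃ v : Fin n, (meander n a b).connectedComponentMk v = c ∧
    ¬ (OneTop a v.val ∧ OneBottom b v.val)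

/-! ### Distinguished linear functionals on matrices -/

/-- The linear functional `M ↦ M i j` on matrices. -/
def entryForm {n : ℕ} (i j : Fin n) : Matrix (Fin n) (Fin n) ℂ →ₗ[ℂ] ℂ :=
  (Matrix.traceLinearMap (Fin n) ℂ ℂ).comp (LinearMap.mulLeft ℂ (Matrix.single j i 1))

open scoped Classical in
/-- The one-form `F̄` read off the meander: the sum, over top edges `{v_i, v_j}` with `i < j`,
of `M ↦ M j i`, plus the sum, over bottom edges `{v_i, v_j}` with `i < j`, of `M ↦ M i j`. -/
def meanderForm (n : ℕ) (a b : List ℕ) : Matrix (Fin n) (Fin n) ℂ →ₗ[ℂ] ℂ :=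
  ∑ i : Fin n, ∑ j : Fin n,
    ((if TopEdge a i.val j.val then entryForm j i else 0) +
      (if BottomEdge b i.val j.val then entryForm i j else 0))

open scoped Classical in
/-- The linear functional `M ↦ M₁₁ + ⋯ + M_{i,i}` (1-based indexing), i.e. the sum of the
first `i` diagonal entries. -/
def partialTraceForm (n i : ℕ) : Matrix (Fin n) (Fin n) ℂ →ₗ[ℂ] ℂ :=
  (Matrix.traceLinearMap (Fin n) ℂ ℂ).comp
    (LinearMap.mulLeft ℂ (Matrix.diagonal fun l : Fin n => if l.val < i then (1 : ℂ) else 0))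

/-- The generating set `{e_{i,1} : 2 ≤ i ≤ a} ∪ {e_{a,j} : 2 ≤ j ≤ a-1}` (1-based indexing) of
a Heisenberg subalgebra of `n × n` matrices. -/
def heisSet (n a : ℕ) : Set (Matrix (Fin n) (Fin n) ℂ) :=
  {M | ∃ i j : Fin n, M = Matrix.single i j 1 ∧
    ((j.val = 0 ∧ 1 ≤ i.val ∧ i.val ≤ a - 1) ∨
      (i.val = a - 1 ∧ 1 ≤ j.val ∧ j.val ≤ a - 2))}



/-! ### Auxiliary lemmas for Statement 1 -/

section AuxContact
variable {L : Type*} [AddCommGroup L] [Module ℂ L]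

/-- `f` vanishes whenever one of its arguments equals `x`. -/
def Kills {ι : Type*} (x : L) (f : L [⋀^ι]→ₗ[ℂ] ℂ) : Prop :=
  ∀ v : ι → L, ∀ i, v i = x → f v = 0

lemma Kills.domDomCongr {p q : ℕ} {x : L} (e : Fin p ≃ Fin q) {f : L [⋀^Fin p]→ₗ[ℂ] ℂ}
    (hf : Kills x f) : Kills x (f.domDomCongr e) := by
  intro v i hi
  rw [AlternatingMap.domDomCongr_apply]
  exact hf (v ∘ e) (e.symm i) (by simp [hi])

lemma Kills.wedge {p q : ℕ} {x : L} {α : L [⋀^Fin p]→ₗ[ℂ] ℂ} {β : L [⋀^Fin q]→ₗ[ℂ] ℂ}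
    (hα : Kills x α) (hβ : Kills x β) : Kills x (ContactSeaweeds.wedge α β) := by
  intro v i hi
  rw [ContactSeaweeds.wedge, AlternatingMap.domDomCongr_apply,
    LinearMap.compAlternatingMap_apply]
  set w : Fin p ⊕ Fin q → L := v ∘ finSumFinEquiv with hw
  suffices h : (α.domCoprod β) w = 0 by rw [h]; simp
  have hwi : w (finSumFinEquiv.symm i) = x := by simp [hw, hi]
  rw [AlternatingMap.domCoprod_apply, MultilinearMap.sum_apply]
  apply Finset.sum_eq_zero
  intro σ _
  induction σ using Quotient.inductionOn' with
  | h σ =>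
    rw [AlternatingMap.domCoprod.summand_mk'']
    rw [MultilinearMap.smul_apply, MultilinearMap.domDomCongr_apply,
      MultilinearMap.domCoprod_apply]
    rcases h : σ.symm (finSumFinEquiv.symm i) with j | j
    · have hx : (w ∘ σ ∘ Sum.inl) j = x := by
        simp only [Function.comp_apply]
        rw [← h, Equiv.apply_symm_apply]
        exact hwi
      have h0 : (↑α : MultilinearMap ℂ (fun _ : Fin p => L) ℂ) (fun i => w (σ (Sum.inl i))) = 0 :=
        hα _ j hx
      rw [h0, TensorProduct.zero_tmul, smul_zero]
    · have hx : (w ∘ σ ∘ Sum.inr) j = x := by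
        simp only [Function.comp_apply]
        rw [← h, Equiv.apply_symm_apply]
        exact hwi
      have h0 : (↑β : MultilinearMap ℂ (fun _ : Fin q => L) ℂ) (fun i => w (σ (Sum.inr i))) = 0 :=
        hβ _ j hx
      rw [h0, TensorProduct.tmul_zero, smul_zero]

lemma Kills.wedgePow {x : L} {β : L [⋀^Fin 2]→ₗ[ℂ] ℂ} (hβ : Kills x β) (k : ℕ) :
    Kills x (ContactSeaweeds.wedgePow β k) := by
  induction k with
  | zero => intro v i hi; exact absurd ((finCongr (by ring : 2 * 0 = 0)) i).pos (by simp)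
  | succ k ih => exact (hβ.wedge ih).domDomCongr _

/-- A top-degree alternating form vanishing on every family containing a fixed nonzero
vector is zero. -/
lemma eq_zero_of_kills [Module.Finite ℂ L] {m : ℕ} (hdim : Module.finrank ℂ L = m)
    {x : L} (hx : x ≠ 0) {f : L [⋀^Fin m]→ₗ[ℂ] ℂ} (hf : Kills x f) : f = 0 := by
  classical
  have hli := (linearIndepOn_singleton_iff (R := ℂ) (v := id)).mpr hx
  set s := hli.extend (Set.subset_univ ({x} : Set L)) with hs
  have hxs : x ∈ s := hli.subset_extend _ (Set.mem_singleton x)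
  let b : Module.Basis s ℂ L := Module.Basis.extend hli
  have hcard : Fintype.card s = m := by
    rw [← Module.finrank_eq_card_basis b, hdim]
  let e : s ≃ Fin m := Fintype.equivFinOfCardEq hcard
  let c : Module.Basis (Fin m) ℂ L := b.reindex e
  have hc : c (e ⟨x, hxs⟩) = x := by
    simp only [c, Module.Basis.reindex_apply, Equiv.symm_apply_apply]
    exact Module.Basis.extend_apply_self hli ⟨x, hxs⟩
  have hzero : ∀ u : Fin m → Fin m, f (fun i => c (u i)) = 0 := by
    intro u
    by_cases hinj : Function.Injective u
    · have hbij : Function.Bijective u := (Finite.injective_iff_bijective).mp hinj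
      let σ : Equiv.Perm (Fin m) := Equiv.ofBijective u hbij
      have : f (fun i => c (u i)) = f (c ∘ σ) := rfl
      rw [this, f.map_perm c σ, hf c (e ⟨x, hxs⟩) hc, smul_zero]
    · rw [Function.not_injective_iff] at hinj
      obtain ⟨i, j, hij, hne⟩ := hinj
      exact f.map_eq_zero_of_eq _ (by rw [hij]) hne
  have : f.toMultilinearMap = (0 : L [⋀^Fin m]→ₗ[ℂ] ℂ).toMultilinearMap :=
    Module.Basis.ext_multilinear (fun _ => c) (fun u => by simpa using hzero u)
  exact AlternatingMap.coe_multilinearMap_injective this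

end AuxContact

section AuxLie
variable {L : Type*} [LieRing L] [LieAlgebra ℂ L]

lemma mem_kirillovKernel_iff (φ : Module.Dual ℂ L) (x : L) :
    x ∈ kirillovKernel φ ↔ ∀ y, φ ⁅x, y⁆ = 0 := Iff.rfl

lemma dForm_kills {φ : Module.Dual ℂ L} {x : L} (hx : x ∈ kirillovKernel φ) :
    Kills x (dForm φ) := by
  intro v i hi
  have hv : ∀ y, φ ⁅x, y⁆ = 0 := hx
  show -φ ⁅v 0, v 1⁆ = 0
  fin_cases i
  · rw [show v 0 = x from hi, hv, neg_zero]
  · rw [show v 1 = x from hi, show φ ⁅v 0, x⁆ = 0 by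
      rw [← lie_skew, map_neg, hv, neg_zero], neg_zero]

lemma contact_kernel_trivial [FiniteDimensional ℂ L] {n : ℕ}
    (hdim : Module.finrank ℂ L = 2 * n + 1) {φ : Module.Dual ℂ L} (hφ : IsContactForm n φ)
    {x : L} (hx : x ∈ kirillovKernel φ) (hφx : φ x = 0) : x = 0 := by
  by_contra hxne
  apply hφ
  refine eq_zero_of_kills (by omega) hxne ?_
  refine Kills.wedge ?_ ((dForm_kills hx).wedgePow n)
  intro v i hi
  fin_cases i
  show φ (v 0) = 0
  rw [show v 0 = x from hi, hφx]

lemma finrank_kirillov_eq_one_of_contact [FiniteDimensional ℂ L] {n : ℕ}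
    (hdim : Module.finrank ℂ L = 2 * n + 1) {φ : Module.Dual ℂ L}
    (hφ : IsContactForm n φ) : Module.finrank ℂ (kirillovKernel φ) ≤ 1 := by
  set K := kirillovKernel φ
  let g : K →ₗ[ℂ] ℂ := φ.comp K.subtype
  have hinj : Function.Injective g := by
    rw [← LinearMap.ker_eq_bot, LinearMap.ker_eq_bot']
    intro ⟨z, hz⟩ hgz
    have : z = 0 := contact_kernel_trivial hdim hφ hz hgz
    exact Subtype.ext this
  calc Module.finrank ℂ K ≤ Module.finrank ℂ ℂ := LinearMap.finrank_le_finrank_of_injective hinj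
    _ = 1 := Module.finrank_self ℂ

lemma one_le_finrank_kirillov [FiniteDimensional ℂ L] {n : ℕ}
    (hdim : Module.finrank ℂ L = 2 * n + 1) (ψ : Module.Dual ℂ L) :
    1 ≤ Module.finrank ℂ (kirillovKernel ψ) := by
  classical
  set m := 2 * n + 1 with hm
  let b : Module.Basis (Fin m) ℂ L := Module.finBasisOfFinrankEq ℂ L hdim
  set A : Matrix (Fin m) (Fin m) ℂ := Matrix.of (fun i j => ψ ⁅b i, b j⁆) with hA
  have hskew : A.transpose = -A := by
    ext i j
    show ψ ⁅b j, b i⁆ = -ψ ⁅b i, b j⁆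
    rw [← lie_skew, map_neg]
  have hdet : A.det = 0 := by
    have h1 : A.det = -A.det := by
      conv_lhs => rw [← Matrix.det_transpose, hskew, Matrix.det_neg]
      simp only [Fintype.card_fin]
      rw [Odd.neg_one_pow ⟨n, by omega⟩, neg_one_mul]
    linear_combination h1 / 2
  obtain ⟨u, hu, hAu⟩ := Matrix.exists_mulVec_eq_zero_iff.mpr hdet
  set x : L := b.equivFun.symm u with hx
  have hxne : x ≠ 0 := by
    intro h
    apply hu
    exact b.equivFun.symm.injective (by rw [← hx, h, map_zero])
  have hxsum : x = ∑ j, u j • b j := b.equivFun_symm_apply u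
  have hrow : ∀ i, ψ ⁅b i, x⁆ = 0 := by
    intro i
    have hAd : ψ ⁅b i, x⁆ = (ψ ∘ₗ LieAlgebra.ad ℂ L (b i)) x := by
      simp [LieAlgebra.ad_apply]
    rw [hAd, hxsum, map_sum]
    have hterm : ∀ j ∈ Finset.univ, (ψ ∘ₗ LieAlgebra.ad ℂ L (b i)) (u j • b j) = A i j * u j := by
      intro j _
      rw [map_smul, smul_eq_mul, mul_comm]
      congr 1
    rw [Finset.sum_congr rfl hterm]
    simpa [Matrix.mulVec, dotProduct] using congrFun hAu i
  have hall : ∀ y : L, ψ ⁅y, x⁆ = 0 := by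
    let g : L →ₗ[ℂ] ℂ :=
      { toFun := fun y => ψ ⁅y, x⁆
        map_add' := fun a c => by rw [add_lie, map_add]
        map_smul' := fun cc a => by rw [smul_lie, map_smul, RingHom.id_apply] }
    have hg : g = 0 := b.ext (fun i => hrow i)
    intro y
    exact congrFun (congrArg (fun h => h.toFun) hg) y
  have hxK : x ∈ kirillovKernel ψ := by
    intro y
    rw [← lie_skew, map_neg, hall, neg_zero]
  have : Nontrivial (kirillovKernel ψ) :=
    Submodule.nontrivial_iff_ne_bot.mpr (fun h => hxne (by
      simpa using (Submodule.eq_bot_iff _).mp h x hxK))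
  exact Module.finrank_pos_iff.mpr this

end AuxLie

/-- A `(2n+1)`-dimensional complex Lie algebra admitting a contact form has
index one. -/
theorem index_one_of_contact (L : Type*) [LieRing L] [LieAlgebra ℂ L] [FiniteDimensional ℂ L]
    (n : ℕ) (hdim : Module.finrank ℂ L = 2 * n + 1)
    (φ : Module.Dual ℂ L) (hφ : IsContactForm n φ) :
    lieIndex L = 1 := by
  have h1 : (1 : ℕ) ∈ {d : ℕ | ∃ ψ : Module.Dual ℂ L, d = Module.finrank ℂ (kirillovKernel ψ)} := by
    refine ⟨φ, ?_⟩
    have hle := finrank_kirillov_eq_one_of_contact hdim hφ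
    have hge := one_le_finrank_kirillov hdim φ
    omega
  refine le_antisymm (Nat.sInf_le h1) ?_
  refine le_csInf ⟨1, h1⟩ ?_
  rintro d ⟨ψ, rfl⟩
  exact one_le_finrank_kirillov hdim ψ

end ContactSeaweeds
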